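/- Every commutative, idempotent, medial groupoid satisfying the pentagonal identity (xy·x)y·x = y is a quasigroup; consequently, for all a,b the equations xa = b and ax = b have the unique solution x = (ab·a)b. -/
import Mathlib


theorem commutative_idempotent_medial_pentagonal_is_quasigroup
    (Q : Type*) (m : Q → Q → Q)
    (hcomm : ∀ x y : Q, m x y = m y x)
    (hidem : ∀ x : Q, m x x = x)
    (hmed : ∀ x y z u : Q, m (m x y) (m z u) = m (m x z) (m y u))
    (hpent : ∀ x y : Q, m (m (m (m x y) x) y) x = y) :
    ∀ a b : Q,
      (∃! x, m x a = b) ∧ (∃! x, m a x = b) ∧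
      m (m (m (m a b) a) b) a = b ∧
      m a (m (m (m a b) a) b) = b ∧
      (∀ x : Q, m x a = b ∨ m a x = b → x = m (m (m a b) a) b) := by
  -- key cancellation identity: x is recoverable from m x a
  have key : ∀ a x : Q, x = m (m (m (m x a) a) a) (m x a) := by
    intro a x
    have h1 : m (m (m (m a x) a) x) a = x := hpent a x
    calc x = m (m (m (m a x) a) x) a := h1.symm
      _ = m (m (m (m a x) a) x) (m a a) := by rw [hidem]
      _ = m (m (m (m a x) a) a) (m x a) := hmed _ _ _ _
      _ = m (m (m (m x a) a) a) (m x a) := by rw [hcomm a x]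
  intro a b
  have hex : m (m (m (m a b) a) b) a = b := hpent a b
  have hex' : m a (m (m (m a b) a) b) = b := by rw [hcomm]; exact hex
  have huniq : ∀ x : Q, m x a = b → x = m (m (m a b) a) b := by
    intro x hx
    have h := key a x
    rw [hx, hcomm b a] at h
    exact h
  refine ⟨⟨m (m (m a b) a) b, hex, fun x hx => huniq x hx⟩,
    ⟨m (m (m a b) a) b, hex', fun x hx => huniq x (by rw [hcomm]; exact hx)⟩,
    hex, hex', fun x hx => ?_⟩
  rcases hx with hx | hx
  · exact huniq x hx
  · exact huniq x (by rw [hcomm]; exact hx)
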